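/- Let ν be a Radon measure on ℝ^d, let C > 0, and let 𝒲 be a countable family of ν-integrable functions, each bounded below by C, with supremum-norm-precompact closure. Let 𝒜 be the set of points x ∈ spt ν such that for every ζ ∈ 𝒲, ‖μ_{x,t} − (ζ dν)_{x,t}‖ → 0 as t → ∞, where μ is a fixed measure with μ ≪ ζ dν for all ζ ∈ 𝒲 and μ(𝒜^c) = 0. Then for every ε > 0 there exist a set J ⊆ 𝒜 with μ(J) > 0 and N ∈ ℕ such that for all x ∈ J, all ζ ∈ 𝒲, and all t ≥ N, ‖μ_{x,t} − (ζ dν)_{x,t}‖ < ε. -/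

import Mathlib

open Filter Metric MeasureTheory
open scoped ENNReal UniformConvergence

/-- The normalized zoom-in `S*_t ν`. -/
noncomputable def zoomIn {d : ℕ} (ν : Measure (EuclideanSpace ℝ (Fin d))) (t : ℝ) :
    Measure (EuclideanSpace ℝ (Fin d)) :=
  (((Measure.map (fun y => Real.exp t • y) ν).restrict (closedBall 0 1)) Set.univ)⁻¹ •
    ((Measure.map (fun y => Real.exp t • y) ν).restrict (closedBall 0 1))

/-- The scenery measure `ν_{x,t} = S*_t T_x ν`. -/
noncomputable def sceneryM {d : ℕ} (ν : Measure (EuclideanSpace ℝ (Fin d)))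
    (x : EuclideanSpace ℝ (Fin d)) (t : ℝ) : Measure (EuclideanSpace ℝ (Fin d)) :=
  zoomIn (Measure.map (fun y => y - x) ν) t

/-- Total variation distance between measures. -/
noncomputable def tvDist {α : Type*} [MeasurableSpace α] (μ ν : Measure α) : ℝ≥0∞ :=
  ⨆ (A : Set α) (_ : MeasurableSet A), ((μ A - ν A) + (ν A - μ A))

open scoped Uniformity

lemma real_main {p q P Q D m C : ℝ} (hC : 0 < C) (hD : 0 ≤ D) (hm : 0 ≤ m)
    (hP : 0 < P) (hQ : 0 < Q) (hq : 0 ≤ q) (hqQ : q ≤ Q)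
    (h1 : p ≤ q + D * m) (h2 : Q ≤ P + D * m) (h3 : C * m ≤ P) :
    p / P ≤ q / Q + 2 * (D / C) := by
  rw [div_le_iff₀ hP]
  have e1 : q / Q * Q = q := div_mul_cancel₀ _ hQ.ne'
  have e2 : q / Q ≤ 1 := (div_le_one hQ).2 hqQ
  have e3 : 0 ≤ q / Q := div_nonneg hq hQ.le
  have e4 : D / C * C = D := div_mul_cancel₀ _ hC.ne'
  have e5 : 0 ≤ D / C := div_nonneg hD hC.le
  have hDm : 0 ≤ D * m := mul_nonneg hD hm
  have g1 : q ≤ q / Q * P + D * m := by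
    calc q = q / Q * Q := e1.symm
      _ ≤ q / Q * (P + D * m) := mul_le_mul_of_nonneg_left h2 e3
      _ = q / Q * P + q / Q * (D * m) := mul_add _ _ _
      _ ≤ q / Q * P + 1 * (D * m) := add_le_add_right (mul_le_mul_of_nonneg_right e2 hDm) _
      _ = q / Q * P + D * m := by ring
  have g2 : D * m ≤ D / C * P := by
    calc D * m = D / C * (C * m) := by rw [← mul_assoc, e4]
      _ ≤ D / C * P := mul_le_mul_of_nonneg_left h3 e5
  calc p ≤ q + D * m := h1
    _ ≤ (q / Q * P + D * m) + D * m := by linarith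
    _ ≤ q / Q * P + D / C * P + D / C * P := by linarith
    _ = (q / Q + 2 * (D / C)) * P := by ring

lemma enn_main {C δ : ℝ} (hC : 0 < C) (hδ : 0 ≤ δ) {p q P Q m : ℝ≥0∞}
    (hm : m ≠ ∞) (hpP : p ≤ P) (hqQ : q ≤ Q)
    (hP0 : P ≠ 0) (hPt : P ≠ ∞) (hQ0 : Q ≠ 0) (hQt : Q ≠ ∞)
    (h1 : p ≤ q + ENNReal.ofReal δ * m) (h2 : Q ≤ P + ENNReal.ofReal δ * m)
    (h3 : ENNReal.ofReal C * m ≤ P) :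
    P⁻¹ * p ≤ Q⁻¹ * q + 2 * (ENNReal.ofReal δ / ENNReal.ofReal C) := by
  have hpt : p ≠ ∞ := ne_top_of_le_ne_top hPt hpP
  have hqt : q ≠ ∞ := ne_top_of_le_ne_top hQt hqQ
  have hDt : ENNReal.ofReal δ ≠ ∞ := ENNReal.ofReal_ne_top
  have hC0 : ENNReal.ofReal C ≠ 0 := by
    simp [ENNReal.ofReal_eq_zero, not_le, hC]
  have hLt : P⁻¹ * p ≠ ∞ := ENNReal.mul_ne_top (ENNReal.inv_ne_top.2 hP0) hpt
  have hDmt : ENNReal.ofReal δ * m ≠ ∞ := ENNReal.mul_ne_top hDt hm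
  have hRt : Q⁻¹ * q + 2 * (ENNReal.ofReal δ / ENNReal.ofReal C) ≠ ∞ := by
    refine ENNReal.add_ne_top.2 ⟨ENNReal.mul_ne_top (ENNReal.inv_ne_top.2 hQ0) hqt, ?_⟩
    exact ENNReal.mul_ne_top (by norm_num) ((ENNReal.div_lt_top hDt hC0).ne)
  rw [← ENNReal.toReal_le_toReal hLt hRt]
  have hT : (q + ENNReal.ofReal δ * m) ≠ ∞ := ENNReal.add_ne_top.2 ⟨hqt, hDmt⟩
  have hT2 : (P + ENNReal.ofReal δ * m) ≠ ∞ := ENNReal.add_ne_top.2 ⟨hPt, hDmt⟩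
  have r1 : p.toReal ≤ q.toReal + δ * m.toReal := by
    have := (ENNReal.toReal_le_toReal hpt hT).2 h1
    rwa [ENNReal.toReal_add hqt hDmt, ENNReal.toReal_mul, ENNReal.toReal_ofReal hδ] at this
  have r2 : Q.toReal ≤ P.toReal + δ * m.toReal := by
    have := (ENNReal.toReal_le_toReal hQt hT2).2 h2
    rwa [ENNReal.toReal_add hPt hDmt, ENNReal.toReal_mul, ENNReal.toReal_ofReal hδ] at this
  have r3 : C * m.toReal ≤ P.toReal := by
    have := (ENNReal.toReal_le_toReal (ENNReal.mul_ne_top ENNReal.ofReal_ne_top hm) hPt).2 h3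
    rwa [ENNReal.toReal_mul, ENNReal.toReal_ofReal hC.le] at this
  have goal : p.toReal / P.toReal ≤ q.toReal / Q.toReal + 2 * (δ / C) :=
    real_main hC hδ ENNReal.toReal_nonneg (ENNReal.toReal_pos hP0 hPt)
      (ENNReal.toReal_pos hQ0 hQt) ENNReal.toReal_nonneg
      ((ENNReal.toReal_le_toReal hqt hQt).2 hqQ) r1 r2 r3
  calc (P⁻¹ * p).toReal = p.toReal / P.toReal := by
        rw [ENNReal.toReal_mul, ENNReal.toReal_inv]; ring
    _ ≤ q.toReal / Q.toReal + 2 * (δ / C) := goal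
    _ = (Q⁻¹ * q + 2 * (ENNReal.ofReal δ / ENNReal.ofReal C)).toReal := by
        rw [ENNReal.toReal_add (ENNReal.mul_ne_top (ENNReal.inv_ne_top.2 hQ0) hqt)
          (ENNReal.mul_ne_top (by norm_num) ((ENNReal.div_lt_top hDt hC0).ne)),
          ENNReal.toReal_mul, ENNReal.toReal_inv, ENNReal.toReal_mul, ENNReal.toReal_div,
          ENNReal.toReal_ofReal hδ, ENNReal.toReal_ofReal hC.le]
        norm_num
        ring

lemma tvDist_triangle {α : Type*} [MeasurableSpace α] (μ₁ μ₂ μ₃ : Measure α) :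
    tvDist μ₁ μ₃ ≤ tvDist μ₁ μ₂ + tvDist μ₂ μ₃ := by
  refine iSup₂_le fun A hA => ?_
  have habc : ∀ a b c : ℝ≥0∞, a - c ≤ (a - b) + (b - c) := fun a b c => by
    rw [tsub_le_iff_right]
    calc a ≤ (a - b) + b := le_tsub_add
    _ ≤ (a - b) + ((b - c) + c) := add_le_add_right le_tsub_add _
    _ = (a - b) + (b - c) + c := (add_assoc _ _ _).symm
  have h1 : (μ₁ A - μ₃ A) + (μ₃ A - μ₁ A) ≤
      ((μ₁ A - μ₂ A) + (μ₂ A - μ₁ A)) + ((μ₂ A - μ₃ A) + (μ₃ A - μ₂ A)) := by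
    calc (μ₁ A - μ₃ A) + (μ₃ A - μ₁ A)
        ≤ ((μ₁ A - μ₂ A) + (μ₂ A - μ₃ A)) + ((μ₃ A - μ₂ A) + (μ₂ A - μ₁ A)) :=
          add_le_add (habc _ _ _) (habc _ _ _)
      _ = ((μ₁ A - μ₂ A) + (μ₂ A - μ₁ A)) + ((μ₂ A - μ₃ A) + (μ₃ A - μ₂ A)) := by ring
  refine h1.trans (add_le_add ?_ ?_)
  · exact le_iSup₂ (f := fun A (_ : MeasurableSet A) => (μ₁ A - μ₂ A) + (μ₂ A - μ₁ A)) A hA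
  · exact le_iSup₂ (f := fun A (_ : MeasurableSet A) => (μ₂ A - μ₃ A) + (μ₃ A - μ₂ A)) A hA


lemma scenery_lip {d : ℕ} (ν : Measure (EuclideanSpace ℝ (Fin d))) {C δ : ℝ} (hC : 0 < C)
    (ζ ζ' : EuclideanSpace ℝ (Fin d) → ℝ) (hζ : ∀ y, C ≤ ζ y) (hζ' : ∀ y, C ≤ ζ' y)
    (hfin : ∫⁻ y, ENNReal.ofReal (ζ y) ∂ν ≠ ∞) (hfin' : ∫⁻ y, ENNReal.ofReal (ζ' y) ∂ν ≠ ∞)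
    (hnear : ∀ y, |ζ y - ζ' y| ≤ δ) (x : EuclideanSpace ℝ (Fin d)) (t : ℝ) :
    tvDist (sceneryM (ν.withDensity fun y => ENNReal.ofReal (ζ y)) x t)
      (sceneryM (ν.withDensity fun y => ENNReal.ofReal (ζ' y)) x t)
    ≤ 4 * (ENNReal.ofReal δ / ENNReal.ofReal C) := by
  have hδ0 : 0 ≤ δ := (abs_nonneg _).trans (hnear 0)
  set ψ : EuclideanSpace ℝ (Fin d) → EuclideanSpace ℝ (Fin d) :=
    fun y => Real.exp t • (y - x) with hψdef
  have hsmul : Measurable fun y : EuclideanSpace ℝ (Fin d) => Real.exp t • y :=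
    by fun_prop
  have hsub : Measurable fun y : EuclideanSpace ℝ (Fin d) => y - x :=
    measurable_id.sub measurable_const
  have hψ : Measurable ψ := hsmul.comp hsub
  have hB : MeasurableSet (closedBall (0 : EuclideanSpace ℝ (Fin d)) 1) := measurableSet_closedBall
  set F : EuclideanSpace ℝ (Fin d) → ℝ≥0∞ := fun y => ENNReal.ofReal (ζ y)
  set G : EuclideanSpace ℝ (Fin d) → ℝ≥0∞ := fun y => ENNReal.ofReal (ζ' y)
  have key : ∀ (f : EuclideanSpace ℝ (Fin d) → ℝ≥0∞) (A : Set (EuclideanSpace ℝ (Fin d))), MeasurableSet A →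
      sceneryM (ν.withDensity f) x t A =
        (∫⁻ y in ψ ⁻¹' (closedBall 0 1), f y ∂ν)⁻¹ *
          ∫⁻ y in ψ ⁻¹' (A ∩ closedBall 0 1), f y ∂ν := by
    intro f A hA
    rw [sceneryM, zoomIn, Measure.map_map hsmul hsub]
    have hcomp : ((fun y : EuclideanSpace ℝ (Fin d) => Real.exp t • y) ∘ fun y => y - x) = ψ := rfl
    rw [hcomp, Measure.smul_apply, smul_eq_mul,
      Measure.restrict_apply MeasurableSet.univ, Set.univ_inter,
      Measure.restrict_apply hA,
      Measure.map_apply hψ hB, Measure.map_apply hψ (hA.inter hB),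
      withDensity_apply _ (hψ hB), withDensity_apply _ (hψ (hA.inter hB))]
  -- basic quantities
  set S : Set (EuclideanSpace ℝ (Fin d)) := ψ ⁻¹' (closedBall 0 1)
  have hSmeas : MeasurableSet S := hψ hB
  set m : ℝ≥0∞ := ν S
  set α : ℝ≥0∞ := ∫⁻ y in S, F y ∂ν
  set β : ℝ≥0∞ := ∫⁻ y in S, G y ∂ν
  have hαfin : α ≠ ∞ := ne_top_of_le_ne_top hfin (setLIntegral_le_lintegral _ _)
  have hβfin : β ≠ ∞ := ne_top_of_le_ne_top hfin' (setLIntegral_le_lintegral _ _)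
  have hCα : ENNReal.ofReal C * m ≤ α := by
    have : ∫⁻ _ in S, ENNReal.ofReal C ∂ν ≤ α :=
      lintegral_mono fun y => ENNReal.ofReal_le_ofReal (hζ y)
    rwa [setLIntegral_const] at this
  have hCβ : ENNReal.ofReal C * m ≤ β := by
    have : ∫⁻ _ in S, ENNReal.ofReal C ∂ν ≤ β :=
      lintegral_mono fun y => ENNReal.ofReal_le_ofReal (hζ' y)
    rwa [setLIntegral_const] at this
  have hC0 : ENNReal.ofReal C ≠ 0 := by simp [ENNReal.ofReal_eq_zero, not_le, hC]
  have hmfin : m ≠ ∞ := by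
    intro hm
    rw [hm, ENNReal.mul_top hC0] at hCα
    exact hαfin (top_le_iff.1 hCα)
  have hFG : ∀ y, F y ≤ G y + ENNReal.ofReal δ := fun y => by
    calc F y ≤ ENNReal.ofReal (ζ' y + δ) :=
          ENNReal.ofReal_le_ofReal (by have := abs_le.1 (hnear y); linarith)
      _ ≤ G y + ENNReal.ofReal δ := ENNReal.ofReal_add_le
  have hGF : ∀ y, G y ≤ F y + ENNReal.ofReal δ := fun y => by
    calc G y ≤ ENNReal.ofReal (ζ y + δ) :=
          ENNReal.ofReal_le_ofReal (by have := abs_le.1 (hnear y); linarith)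
      _ ≤ F y + ENNReal.ofReal δ := ENNReal.ofReal_add_le
  have hcompare : ∀ (f g : EuclideanSpace ℝ (Fin d) → ℝ≥0∞), (∀ y, f y ≤ g y + ENNReal.ofReal δ) →
      ∀ T : Set (EuclideanSpace ℝ (Fin d)), T ⊆ S → MeasurableSet T →
      ∫⁻ y in T, f y ∂ν ≤ (∫⁻ y in T, g y ∂ν) + ENNReal.ofReal δ * m := by
    intro f g hfg T hTS hT
    calc ∫⁻ y in T, f y ∂ν ≤ ∫⁻ y in T, (g y + ENNReal.ofReal δ) ∂ν :=
          lintegral_mono hfg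
      _ = (∫⁻ y in T, g y ∂ν) + ∫⁻ _ in T, ENNReal.ofReal δ ∂ν :=
          lintegral_add_right _ measurable_const
      _ = (∫⁻ y in T, g y ∂ν) + ENNReal.ofReal δ * ν T := by rw [setLIntegral_const]
      _ ≤ (∫⁻ y in T, g y ∂ν) + ENNReal.ofReal δ * m :=
          add_le_add_right (mul_le_mul_right (measure_mono hTS) _) _
  refine iSup₂_le fun A hA => ?_
  rw [key F A hA, key G A hA]
  set TA : Set (EuclideanSpace ℝ (Fin d)) := ψ ⁻¹' (A ∩ closedBall 0 1)
  have hTAS : TA ⊆ S := Set.preimage_mono Set.inter_subset_right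
  have hTAm : MeasurableSet TA := hψ (hA.inter hB)
  set a : ℝ≥0∞ := ∫⁻ y in TA, F y ∂ν
  set b : ℝ≥0∞ := ∫⁻ y in TA, G y ∂ν
  have haα : a ≤ α := lintegral_mono_set hTAS
  have hbβ : b ≤ β := lintegral_mono_set hTAS
  by_cases hm0 : m = 0
  · have hα0 : α = 0 := le_antisymm (by
      calc α ≤ ∫⁻ _ in S, ∞ ∂ν := lintegral_mono fun _ => le_top
        _ = ∞ * m := setLIntegral_const _ _
        _ = 0 := by rw [hm0, mul_zero]) zero_le
    have hβ0 : β = 0 := le_antisymm (by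
      calc β ≤ ∫⁻ _ in S, ∞ ∂ν := lintegral_mono fun _ => le_top
        _ = ∞ * m := setLIntegral_const _ _
        _ = 0 := by rw [hm0, mul_zero]) zero_le
    have ha0 : a = 0 := le_antisymm (haα.trans_eq hα0) zero_le
    have hb0 : b = 0 := le_antisymm (hbβ.trans_eq hβ0) zero_le
    simp [ha0, hb0]
  · have hα0 : α ≠ 0 := by
      intro h
      exact hm0 (by simpa [h, hC0] using hCα)
    have hβ0 : β ≠ 0 := by
      intro h
      exact hm0 (by simpa [h, hC0] using hCβ)
    have hab : a ≤ b + ENNReal.ofReal δ * m := hcompare F G hFG TA hTAS hTAm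
    have hba : b ≤ a + ENNReal.ofReal δ * m := hcompare G F hGF TA hTAS hTAm
    have hαβ : α ≤ β + ENNReal.ofReal δ * m := hcompare F G hFG S Set.Subset.rfl hSmeas
    have hβα : β ≤ α + ENNReal.ofReal δ * m := hcompare G F hGF S Set.Subset.rfl hSmeas
    have d1 : α⁻¹ * a - β⁻¹ * b ≤ 2 * (ENNReal.ofReal δ / ENNReal.ofReal C) := by
      rw [tsub_le_iff_right, add_comm]
      exact enn_main hC hδ0 hmfin haα hbβ hα0 hαfin hβ0 hβfin hab hβα hCα
    have d2 : β⁻¹ * b - α⁻¹ * a ≤ 2 * (ENNReal.ofReal δ / ENNReal.ofReal C) := by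
      rw [tsub_le_iff_right, add_comm]
      exact enn_main hC hδ0 hmfin hbβ haα hβ0 hβfin hα0 hαfin hba hαβ hCβ
    calc (α⁻¹ * a - β⁻¹ * b) + (β⁻¹ * b - α⁻¹ * a)
        ≤ 2 * (ENNReal.ofReal δ / ENNReal.ofReal C)
          + 2 * (ENNReal.ofReal δ / ENNReal.ofReal C) := add_le_add d1 d2
      _ = 4 * (ENNReal.ofReal δ / ENNReal.ofReal C) := by ring

/-- **Uniform approximation of the scenery on a positive-measure set.**
Let `ν` be Radon, `𝒲` a countable sup-norm-precompact family of ν-integrable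
densities bounded below by `C > 0`, `μ ≪ ζ dν` for all `ζ ∈ 𝒲`, and let `𝒜` be
the set of points where `‖μ_{x,t} − (ζ dν)_{x,t}‖ → 0` for every `ζ ∈ 𝒲`;
assume `μ(𝒜ᶜ) = 0`. Then for every `ε > 0` there are `J ⊆ 𝒜` with `μ J > 0`
and `N ∈ ℕ` such that `‖μ_{x,t} − (ζ dν)_{x,t}‖ < ε` for all `x ∈ J`, `ζ ∈ 𝒲`,
`t ≥ N`. -/
theorem stmt14 {d : ℕ} (ν : Measure (EuclideanSpace ℝ (Fin d)))
    [IsLocallyFiniteMeasure ν] (C : ℝ) (hC : 0 < C)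
    (𝒲 : Set (EuclideanSpace ℝ (Fin d) →ᵤ ℝ)) (hcount : 𝒲.Countable)
    (hint : ∀ ζ ∈ 𝒲, Integrable ζ ν) (hlb : ∀ ζ ∈ 𝒲, ∀ x, C ≤ ζ x)
    (hcompact : IsCompact (closure 𝒲))
    (μ : Measure (EuclideanSpace ℝ (Fin d))) [IsProbabilityMeasure μ]
    (hac : ∀ ζ ∈ 𝒲, μ ≪ ν.withDensity (fun y => ENNReal.ofReal (ζ y)))
    (𝒜 : Set (EuclideanSpace ℝ (Fin d)))
    (h𝒜 : 𝒜 = {x | ∀ ζ ∈ 𝒲, Tendsto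
      (fun t => tvDist (sceneryM μ x t)
        (sceneryM (ν.withDensity (fun y => ENNReal.ofReal (ζ y))) x t))
      atTop (nhds 0)})
    (hμ𝒜 : μ 𝒜ᶜ = 0) :
    ∀ ε : ℝ≥0∞, 0 < ε →
      ∃ (J : Set (EuclideanSpace ℝ (Fin d))) (N : ℕ), J ⊆ 𝒜 ∧ 0 < μ J ∧
        ∀ x ∈ J, ∀ ζ ∈ 𝒲, ∀ t : ℝ, (N : ℝ) ≤ t →
          tvDist (sceneryM μ x t)
            (sceneryM (ν.withDensity (fun y => ENNReal.ofReal (ζ y))) x t) < ε := by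
  intro ε hε
  -- μ 𝒜 is positive
  have h𝒜pos : 0 < μ 𝒜 := by
    have h1 : (1 : ℝ≥0∞) ≤ μ 𝒜 + μ 𝒜ᶜ := by
      calc (1 : ℝ≥0∞) = μ Set.univ := (measure_univ).symm
        _ = μ (𝒜 ∪ 𝒜ᶜ) := by rw [Set.union_compl_self]
        _ ≤ μ 𝒜 + μ 𝒜ᶜ := measure_union_le _ _
    rw [hμ𝒜, add_zero] at h1
    exact lt_of_lt_of_le one_pos h1
  -- trivial case: empty family
  rcases 𝒲.eq_empty_or_nonempty with hemp | hne
  · refine ⟨𝒜, 0, Set.Subset.rfl, h𝒜pos, fun x hx ζ hζ t ht => ?_⟩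
    rw [hemp] at hζ
    exact absurd hζ (Set.notMem_empty _)
  -- the truncated target
  set ε' : ℝ≥0∞ := min ε 1 with hε'def
  have hε'0 : 0 < ε' := lt_min hε one_pos
  have hε't : ε' ≠ ∞ := ne_top_of_le_ne_top ENNReal.one_ne_top (min_le_right _ _)
  set r : ℝ := ε'.toReal with hrdef
  have hr0 : 0 < r := ENNReal.toReal_pos hε'0.ne' hε't
  have hhalfpos : 0 < ε' / 2 := ENNReal.div_pos hε'0.ne' (by norm_num)
  have hhalft : ε' / 2 ≠ ∞ := by
    exact (ENNReal.div_lt_top hε't (by norm_num)).ne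
  -- the Lipschitz radius
  set δ : ℝ := C * (r / 16) with hδdef
  have hδpos : 0 < δ := by positivity
  have hC0' : ENNReal.ofReal C ≠ 0 := by simp [ENNReal.ofReal_eq_zero, not_le, hC]
  have hLipBound : 4 * (ENNReal.ofReal δ / ENNReal.ofReal C) ≤ ε' / 2 := by
    have e1 : ENNReal.ofReal δ / ENNReal.ofReal C = ENNReal.ofReal (r / 16) := by
      rw [hδdef, ENNReal.ofReal_mul hC.le, mul_comm, mul_div_assoc,
        ENNReal.div_self hC0' ENNReal.ofReal_ne_top, mul_one]
    rw [e1, ← ENNReal.ofReal_ofNat, ← ENNReal.ofReal_mul (by norm_num)]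
    refine ENNReal.ofReal_le_of_le_toReal ?_
    rw [ENNReal.toReal_div, ← hrdef]
    have h4 : (4 : ℝ) * (r / 16) ≤ r / 2 := by linarith
    simpa using h4
  -- get a finite δ-net inside 𝒲
  have htb : TotallyBounded 𝒲 := hcompact.totallyBounded.subset subset_closure
  have hV : {p : ℝ × ℝ | dist p.1 p.2 < δ} ∈ 𝓤 ℝ := dist_mem_uniformity hδpos
  have hgen : UniformFun.gen (EuclideanSpace ℝ (Fin d)) ℝ {p : ℝ × ℝ | dist p.1 p.2 < δ}
      ∈ 𝓤 (EuclideanSpace ℝ (Fin d) →ᵤ ℝ) :=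
    (UniformFun.hasBasis_uniformity _ _).mem_of_mem hV
  obtain ⟨F, hF𝒲, hFfin, hcover⟩ := totallyBounded_iff_subset.1 htb _ hgen
  -- the Egorov sets
  set A : ℕ → Set (EuclideanSpace ℝ (Fin d)) := fun n =>
    {x ∈ 𝒜 | ∀ g ∈ F, ∀ T : ℝ, (n : ℝ) ≤ T →
      tvDist (sceneryM μ x T)
        (sceneryM (ν.withDensity fun y => ENNReal.ofReal (g y)) x T) < ε' / 2} with hAdef
  have hcup : 𝒜 ⊆ ⋃ n, A n := by
    intro x hx
    have hx' := hx
    rw [h𝒜] at hx'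
    have hev : ∀ᶠ T in atTop, ∀ g ∈ F, tvDist (sceneryM μ x T)
        (sceneryM (ν.withDensity fun y => ENNReal.ofReal (g y)) x T) < ε' / 2 := by
      rw [eventually_all_finite hFfin]
      intro g hg
      exact (hx' g (hF𝒲 hg)).eventually_lt_const hhalfpos
    obtain ⟨T₀, hT₀⟩ := eventually_atTop.1 hev
    refine Set.mem_iUnion.2 ⟨⌈T₀⌉₊, hx, fun g hg T hT => ?_⟩
    exact hT₀ T (le_trans (Nat.le_ceil T₀) hT) g hg
  -- some A n has positive measure
  have hexists : ∃ n, 0 < μ (A n) := by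
    by_contra h
    push_neg at h
    have hz : ∀ n, μ (A n) = 0 := fun n => le_antisymm (h n) zero_le
    have : μ 𝒜 ≤ 0 := by
      calc μ 𝒜 ≤ μ (⋃ n, A n) := measure_mono hcup
        _ ≤ ∑' n, μ (A n) := measure_iUnion_le _
        _ = 0 := by simp [hz]
    exact absurd (lt_of_lt_of_le h𝒜pos this) (lt_irrefl _)
  obtain ⟨N, hN⟩ := hexists
  refine ⟨A N, N, fun x hx => hx.1, hN, fun x hx ζ hζ T hT => ?_⟩
  obtain ⟨g, hgF, hgnear⟩ := Set.mem_iUnion₂.1 (hcover hζ)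
  have hnear : ∀ y, |(g : EuclideanSpace ℝ (Fin d) → ℝ) y - ζ y| ≤ δ := by
    intro y
    have := hgnear y
    rw [Set.mem_setOf_eq] at this
    rw [abs_sub_comm, ← Real.dist_eq]
    exact this.le
  have hLip : tvDist (sceneryM (ν.withDensity fun y => ENNReal.ofReal (g y)) x T)
      (sceneryM (ν.withDensity fun y => ENNReal.ofReal (ζ y)) x T)
      ≤ 4 * (ENNReal.ofReal δ / ENNReal.ofReal C) :=
    scenery_lip ν hC g ζ (hlb g (hF𝒲 hgF)) (hlb ζ hζ)
      (hint g (hF𝒲 hgF)).lintegral_lt_top.ne (hint ζ hζ).lintegral_lt_top.ne hnear x T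
  have htri := tvDist_triangle (sceneryM μ x T)
    (sceneryM (ν.withDensity fun y => ENNReal.ofReal (g y)) x T)
    (sceneryM (ν.withDensity fun y => ENNReal.ofReal (ζ y)) x T)
  have hg_small := hx.2 g hgF T hT
  have hsum : tvDist (sceneryM μ x T)
        (sceneryM (ν.withDensity fun y => ENNReal.ofReal (g y)) x T)
      + tvDist (sceneryM (ν.withDensity fun y => ENNReal.ofReal (g y)) x T)
        (sceneryM (ν.withDensity fun y => ENNReal.ofReal (ζ y)) x T) < ε' := by
    have h2 := ENNReal.add_lt_add_of_lt_of_le (ne_top_of_le_ne_top hhalft (hLip.trans hLipBound)) hg_small (hLip.trans hLipBound)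
    rwa [ENNReal.add_halves] at h2
  exact lt_of_le_of_lt htri (lt_of_lt_of_le hsum (min_le_left _ _))
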